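/- Let A be the K × N matrix of Construction 1′ and let s be a positive integer with s < (1/2)(√K + 1). Then any two vectors x_1, x_2 ∈ ℝ^N each having at most s nonzero entries and satisfying A x_1 = A x_2 must be equal; that is, s-sparse signals are uniquely determined by their measurements under A. -/

import Mathlib

open Complex Finset

/-- The canonical additive character of a finite field `F` of characteristic `p`:
`χ(y) = exp(2πi · Tr(y) / p) = ω_p^{Tr(y)}`, where `Tr : F → F_p` is the field trace. -/
noncomputable def addChar (p : ℕ) {F : Type*} [Field F] [Fintype F] [Algebra (ZMod p) F]
    (y : F) : ℂ :=
  Complex.exp (2 * Real.pi * Complex.I * ((Algebra.trace (ZMod p) F y).val : ℂ) / p)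

section Helpers

variable (p : ℕ) [Fact p.Prime]

private lemma expp_congr {a b : ℤ} (h : (p : ℤ) ∣ b - a) :
    Complex.exp (2 * Real.pi * Complex.I * (a : ℂ) / p) =
    Complex.exp (2 * Real.pi * Complex.I * (b : ℂ) / p) := by
  have hp : (p : ℂ) ≠ 0 := Nat.cast_ne_zero.mpr (Fact.out (p := p.Prime)).ne_zero
  obtain ⟨k, hk⟩ := h
  have hb : (b : ℂ) = (a : ℂ) + (p : ℂ) * (k : ℂ) := by
    have : b = a + (p : ℤ) * k := by omega
    exact_mod_cast congrArg (fun z : ℤ => (z : ℂ)) this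
  rw [hb, show 2 * (Real.pi : ℂ) * Complex.I * ((a : ℂ) + (p : ℂ) * (k : ℂ)) / p
      = 2 * Real.pi * Complex.I * (a : ℂ) / p + (k : ℂ) * (2 * Real.pi * Complex.I) by
    field_simp]
  rw [Complex.exp_add, Complex.exp_int_mul_two_pi_mul_I, mul_one]

private lemma expp_congr_nat {a b : ℕ} (h : a % p = b % p) :
    Complex.exp (2 * Real.pi * Complex.I * (a : ℂ) / p) =
    Complex.exp (2 * Real.pi * Complex.I * (b : ℂ) / p) := by
  have hd : (p : ℤ) ∣ (b : ℤ) - (a : ℤ) := by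
    have hm : (a : ℤ) % p = (b : ℤ) % p := by
      omega
    exact Int.ModEq.dvd hm
  have := expp_congr p hd
  simpa using this

variable {F : Type*} [Field F] [Fintype F] [Algebra (ZMod p) F]

private lemma psi_zero : addChar p (0 : F) = 1 := by
  haveI : NeZero p := ⟨(Fact.out (p := p.Prime)).ne_zero⟩
  unfold addChar
  rw [map_zero]
  simp

private lemma psi_add (a b : F) : addChar p (a + b) = addChar p a * addChar p b := by
  haveI : NeZero p := ⟨(Fact.out (p := p.Prime)).ne_zero⟩
  unfold addChar
  rw [map_add, ← Complex.exp_add]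
  set t := Algebra.trace (ZMod p) F a
  set u := Algebra.trace (ZMod p) F b
  have h1 : 2 * (Real.pi : ℂ) * Complex.I * (t.val : ℂ) / p
      + 2 * Real.pi * Complex.I * (u.val : ℂ) / p
      = 2 * Real.pi * Complex.I * ((t.val + u.val : ℕ) : ℂ) / p := by
    push_cast; ring
  rw [h1, ZMod.val_add]
  exact expp_congr_nat p (Nat.mod_mod_of_dvd _ dvd_rfl)

private lemma psi_abs (y : F) : ‖addChar p y‖ = 1 := by
  unfold addChar
  rw [show 2 * (Real.pi : ℂ) * Complex.I * (((Algebra.trace (ZMod p) F y).val : ℕ) : ℂ) / p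
      = ((2 * Real.pi * ((Algebra.trace (ZMod p) F y).val : ℝ) / p : ℝ) : ℂ) * Complex.I by
    push_cast; ring]
  exact Complex.norm_exp_ofReal_mul_I _

private lemma psi_ne_zero (y : F) : addChar p y ≠ 0 := Complex.exp_ne_zero _

private lemma psi_conj (y : F) : (starRingEnd ℂ) (addChar p y) = addChar p (-y) := by
  have h1 : addChar p (-y) * addChar p y = 1 := by
    rw [← psi_add, neg_add_cancel, psi_zero]
  have h2 : (starRingEnd ℂ) (addChar p y) * addChar p y = 1 := by
    rw [mul_comm, Complex.mul_conj, Complex.normSq_eq_norm_sq, psi_abs]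
    norm_num
  exact mul_right_cancel₀ (psi_ne_zero p y) (h2.trans h1.symm)

private lemma psi_ne_one {y : F} (hy : Algebra.trace (ZMod p) F y ≠ 0) :
    addChar p y ≠ 1 := by
  haveI : NeZero p := ⟨(Fact.out (p := p.Prime)).ne_zero⟩
  intro h
  unfold addChar at h
  rw [Complex.exp_eq_one_iff] at h
  obtain ⟨n, hn⟩ := h
  set v := (Algebra.trace (ZMod p) F y).val with hv
  have hp : (p : ℂ) ≠ 0 := Nat.cast_ne_zero.mpr (Fact.out (p := p.Prime)).ne_zero
  have h2 : (2 * (Real.pi : ℂ) * Complex.I) ≠ 0 := by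
    simp [Real.pi_ne_zero, Complex.I_ne_zero]
  have hvc : (v : ℂ) = (n : ℂ) * p := by
    apply mul_left_cancel₀ h2
    field_simp at hn
    linear_combination (2 * (Real.pi : ℂ) * Complex.I) * hn
  have hvz : (v : ℤ) = n * p := by exact_mod_cast hvc
  have hdvd : p ∣ v := by
    have : (p : ℤ) ∣ (v : ℤ) := ⟨n, by rw [hvz]; ring⟩
    exact_mod_cast this
  have hlt : v < p := ZMod.val_lt _
  have hne : v ≠ 0 := fun h0 => hy ((ZMod.val_eq_zero _).mp h0)
  have := Nat.eq_zero_of_dvd_of_lt hdvd hlt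
  exact hne this

private lemma psi_sum_mul (a : F) (ha : a ≠ 0) : ∑ y : F, addChar p (a * y) = 0 := by
  haveI : FiniteDimensional (ZMod p) F := Module.finite_iff_finite.mpr inferInstance
  have hnd := traceForm_nondegenerate (ZMod p) F
  have hb : ∃ b : F, Algebra.trace (ZMod p) F (a * b) ≠ 0 := by
    by_contra! hf
    refine ha (hnd.1 a fun n => ?_)
    rw [Algebra.traceForm_apply]
    exact hf n
  obtain ⟨b, hb⟩ := hb
  have hc : addChar p (a * b) ≠ 1 := psi_ne_one p hb
  set S := ∑ y : F, addChar p (a * y) with hS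
  have hshift : S * addChar p (a * b) = S := by
    rw [hS, Finset.sum_mul]
    have h1 : ∀ y : F, addChar p (a * y) * addChar p (a * b) = addChar p (a * (y + b)) := by
      intro y
      rw [← psi_add]
      congr 1
      ring
    rw [Finset.sum_congr rfl fun y _ => h1 y]
    exact Fintype.sum_equiv (Equiv.addRight b) _ _ fun y => rfl
  have : S * (addChar p (a * b) - 1) = 0 := by rw [mul_sub, mul_one, hshift, sub_self]
  rcases mul_eq_zero.mp this with h | h
  · exact h
  · exact absurd (sub_eq_zero.mp h) hc

private lemma psi_quad_abs (hp2 : (2 : F) ≠ 0) (c1 c2 : F) (h2 : c2 ≠ 0) :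
    ‖∑ x : F, addChar p (c1 * x + c2 * x ^ 2)‖ = Real.sqrt (Fintype.card F) := by
  set S := ∑ x : F, addChar p (c1 * x + c2 * x ^ 2) with hSdef
  have key : S * (starRingEnd ℂ) S = (Fintype.card F : ℂ) := by
    have hconj : (starRingEnd ℂ) S = ∑ y : F, addChar p (-(c1 * y + c2 * y ^ 2)) := by
      rw [hSdef, map_sum]
      exact Finset.sum_congr rfl fun y _ => psi_conj p _
    rw [hconj, hSdef, Finset.sum_mul_sum]
    have hterm : ∀ x y : F, addChar p (c1 * x + c2 * x ^ 2) * addChar p (-(c1 * y + c2 * y ^ 2))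
        = addChar p ((c1 * x + c2 * x ^ 2) - (c1 * y + c2 * y ^ 2)) := by
      intro x y
      rw [← psi_add]
      congr 1
      ring
    calc (∑ x : F, ∑ y : F, addChar p (c1 * x + c2 * x ^ 2) * addChar p (-(c1 * y + c2 * y ^ 2)))
        = ∑ y : F, ∑ x : F, addChar p ((c1 * x + c2 * x ^ 2) - (c1 * y + c2 * y ^ 2)) := by
          rw [Finset.sum_comm]
          exact Finset.sum_congr rfl fun y _ => Finset.sum_congr rfl fun x _ => hterm x y
      _ = ∑ y : F, ∑ d : F, addChar p ((c1 * d + c2 * d ^ 2) + (2 * c2 * d) * y) := by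
          refine Finset.sum_congr rfl fun y _ => ?_
          rw [← Equiv.sum_comp (Equiv.addRight y)
            (fun x => addChar p ((c1 * x + c2 * x ^ 2) - (c1 * y + c2 * y ^ 2)))]
          refine Finset.sum_congr rfl fun d _ => ?_
          simp only [Equiv.coe_addRight]
          congr 1
          ring
      _ = ∑ d : F, addChar p (c1 * d + c2 * d ^ 2) * ∑ y : F, addChar p ((2 * c2 * d) * y) := by
          rw [Finset.sum_comm]
          refine Finset.sum_congr rfl fun d _ => ?_
          rw [Finset.mul_sum]
          exact Finset.sum_congr rfl fun y _ => (psi_add p _ _)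
      _ = (Fintype.card F : ℂ) := by
          rw [Finset.sum_eq_single_of_mem 0 (Finset.mem_univ 0)]
          · rw [show c1 * 0 + c2 * (0:F) ^ 2 = 0 by ring, psi_zero p,
              Finset.sum_congr rfl fun y (_ : y ∈ Finset.univ) => by
                rw [show (2 * c2 * 0) * y = (0:F) by ring, psi_zero p]]
            simp
          · intro d _ hd
            rw [psi_sum_mul p _ (by
              exact mul_ne_zero (mul_ne_zero hp2 h2) hd), mul_zero]
  have hnorm : Complex.normSq S = (Fintype.card F : ℝ) := by
    have := key
    rw [Complex.mul_conj] at this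
    exact_mod_cast this
  rw [Complex.norm_def, hnorm]

end Helpers


/-- `b_i` associated to the digit `u_i`: `b = 0` if `u = 0`, and `b = α^(u-1)` if `u ≥ 1`. -/
noncomputable def bOf {F : Type*} [Field F] (α : F) (u : ℕ) : F :=
  if u = 0 then 0 else α ^ (u - 1)

set_option maxHeartbeats 1000000 in
/-- For the Construction 1′ matrix `A`, if `s < (1/2)(√K + 1)` then `s`-sparse real
signals are uniquely determined by their measurements under `A`. -/
theorem construction1prime_sparse_recovery
    (p m : ℕ) [Fact p.Prime] (hodd : Odd p) (hm : 0 < m)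
    (K N : ℕ) (hK : K = p ^ m) (hN : N = K ^ 2)
    (F : Type*) [Field F] [Fintype F] [Algebra (ZMod p) F]
    (hcard : Fintype.card F = p ^ m)
    (α : F) (hα : ∀ x : F, x ≠ 0 → ∃ j : ℕ, α ^ j = x)
    (A : Matrix (Fin K) (Fin N) ℂ)
    (hA : ∀ (k : Fin K) (n : Fin N), A k n =
      if (k : ℕ) = 0 then ((Real.sqrt K : ℂ))⁻¹
      else ((Real.sqrt K : ℂ))⁻¹ * addChar p (bOf α ((n : ℕ) % K) * α ^ ((k : ℕ) - 1) +
        bOf α ((n : ℕ) / K) * α ^ (2 * ((k : ℕ) - 1))))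
    (s : ℕ) (hs : 0 < s) (hsbound : (s : ℝ) < (1 / 2) * (Real.sqrt K + 1))
    (x₁ x₂ : Fin N → ℝ)
    (hx₁ : (Finset.univ.filter fun n => x₁ n ≠ 0).card ≤ s)
    (hx₂ : (Finset.univ.filter fun n => x₂ n ≠ 0).card ≤ s)
    (hAx : A.mulVec (fun n => (x₁ n : ℂ)) = A.mulVec (fun n => (x₂ n : ℂ))) :
    x₁ = x₂ := by
  classical
  haveI : NeZero p := ⟨(Fact.out (p := p.Prime)).ne_zero⟩
  have hp : p.Prime := Fact.out
  have hp3 : 3 ≤ p := by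
    have h2 := hp.two_le
    have := Nat.odd_iff.mp hodd
    omega
  have hK3 : 3 ≤ K := by
    rw [hK]
    calc 3 ≤ p := hp3
    _ ≤ p ^ m := Nat.le_self_pow hm.ne' p
  have hKposR : (0 : ℝ) < K := by exact_mod_cast (by omega : 0 < K)
  have hsqrtpos : 0 < Real.sqrt K := Real.sqrt_pos.mpr hKposR
  have hsqrt_sq : Real.sqrt K * Real.sqrt K = (K : ℝ) := Real.mul_self_sqrt hKposR.le
  haveI hchar : CharP F p := charP_of_injective_algebraMap (algebraMap (ZMod p) F).injective p
  have hp2F : (2 : F) ≠ 0 := by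
    intro h
    have h2 : ((2 : ℕ) : F) = 0 := by exact_mod_cast h
    have := (CharP.cast_eq_zero_iff F p 2).mp h2
    have := Nat.le_of_dvd (by norm_num) this
    omega
  -- α is a nonzero generator
  have hα0 : α ≠ 0 := by
    intro h
    have hsub : (Finset.univ : Finset F) ⊆ {0, 1} := by
      intro x _
      rcases eq_or_ne x 0 with rfl | hx
      · simp
      obtain ⟨j, hj⟩ := hα x hx
      cases j with
      | zero =>
        simp only [pow_zero] at hj
        simp [← hj]
      | succ j =>
        rw [h, zero_pow (Nat.succ_ne_zero j)] at hj
        exact absurd hj.symm hx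
    have hcle := Finset.card_le_card hsub
    have h2 : ({0, 1} : Finset F).card ≤ 2 := Finset.card_insert_le _ _ |>.trans (by simp)
    rw [Finset.card_univ, hcard] at hcle
    have : p ≤ p ^ m := Nat.le_self_pow hm.ne' p
    omega
  set uα : Fˣ := Units.mk0 α hα0 with huα
  have huval : ∀ j : ℕ, ((uα ^ j : Fˣ) : F) = α ^ j := by
    intro j; rw [Units.val_pow_eq_pow_val]; rfl
  have hord : orderOf uα = K - 1 := by
    have h1 : ∀ x : Fˣ, x ∈ Subgroup.zpowers uα := by
      intro x
      obtain ⟨j, hj⟩ := hα x.val x.ne_zero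
      rw [Subgroup.mem_zpowers_iff]
      exact ⟨(j : ℤ), by rw [zpow_natCast]; exact Units.ext (by rw [huval j]; exact hj)⟩
    rw [orderOf_eq_card_of_forall_mem_zpowers h1, Nat.card_eq_fintype_card,
      Fintype.card_units, hcard, hK]
  have hpow_inj : ∀ i j : ℕ, i < K - 1 → j < K - 1 → α ^ i = α ^ j → i = j := by
    intro i j hi hj hij
    have h1 : uα ^ i = uα ^ j := Units.ext (by rw [huval, huval]; exact hij)
    exact pow_injOn_Iio_orderOf (by rw [hord]; exact hi) (by rw [hord]; exact hj) h1
  have hpow_surj : ∀ x : F, x ≠ 0 → ∃ i : ℕ, i < K - 1 ∧ α ^ i = x := by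
    intro x hx
    obtain ⟨j, hj⟩ := hα x hx
    refine ⟨j % (K - 1), Nat.mod_lt _ (by omega), ?_⟩
    have h1 : uα ^ (j % (K - 1)) = uα ^ j := by
      rw [← hord]; exact pow_mod_orderOf uα j
    have := congrArg Units.val h1
    rw [huval, huval] at this
    rw [this, hj]
  have hbOf_inj : ∀ a b : ℕ, a < K → b < K → bOf α a = bOf α b → a = b := by
    intro a b ha hb hab
    unfold bOf at hab
    split_ifs at hab with h1 h2 h2
    · omega
    · exact absurd hab.symm (pow_ne_zero _ hα0)
    · exact absurd hab (pow_ne_zero _ hα0)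
    · have := hpow_inj (a - 1) (b - 1) (by omega) (by omega) hab
      omega
  have hKpos : 0 < K := by omega
  have hBinj : ∀ n n' : Fin N, bOf α ((n : ℕ) % K) = bOf α ((n' : ℕ) % K) →
      bOf α ((n : ℕ) / K) = bOf α ((n' : ℕ) / K) → n = n' := by
    intro n n' h1 h2
    have hNKK : N = K * K := by rw [hN, sq]
    have hn2 : (n : ℕ) < K * K := lt_of_lt_of_eq n.isLt hNKK
    have hn2' : (n' : ℕ) < K * K := lt_of_lt_of_eq n'.isLt hNKK
    have e1 : (n : ℕ) % K = (n' : ℕ) % K :=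
      hbOf_inj _ _ (Nat.mod_lt _ hKpos) (Nat.mod_lt _ hKpos) h1
    have e2 : (n : ℕ) / K = (n' : ℕ) / K :=
      hbOf_inj _ _ (Nat.div_lt_iff_lt_mul hKpos |>.mpr hn2)
        (Nat.div_lt_iff_lt_mul hKpos |>.mpr hn2') h2
    have : (n : ℕ) = (n' : ℕ) := by
      conv_lhs => rw [← Nat.div_add_mod (n : ℕ) K]
      conv_rhs => rw [← Nat.div_add_mod (n' : ℕ) K]
      rw [e1, e2]
    exact Fin.ext this
  have hKC : ((Real.sqrt K : ℂ))⁻¹ * ((Real.sqrt K : ℂ))⁻¹ = (K : ℂ)⁻¹ := by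
    rw [← mul_inv, ← Complex.ofReal_mul, hsqrt_sq]
    norm_num
  set k0 : Fin K := ⟨0, by omega⟩ with hk0
  -- Gram matrix formula
  have hGram : ∀ n n' : Fin N, (∑ k : Fin K, (starRingEnd ℂ) (A k n) * A k n')
      = (K : ℂ)⁻¹ * ∑ x : F, addChar p
          ((bOf α ((n' : ℕ) % K) - bOf α ((n : ℕ) % K)) * x +
           (bOf α ((n' : ℕ) / K) - bOf α ((n : ℕ) / K)) * x ^ 2) := by
    intro n n'
    set b1 := bOf α ((n : ℕ) % K)
    set b2 := bOf α ((n : ℕ) / K)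
    set b1' := bOf α ((n' : ℕ) % K)
    set b2' := bOf α ((n' : ℕ) / K)
    rw [← Finset.add_sum_erase _ _ (Finset.mem_univ k0),
      ← Finset.add_sum_erase _ (fun x : F => addChar p ((b1' - b1) * x + (b2' - b2) * x ^ 2))
        (Finset.mem_univ (0 : F)), mul_add]
    congr 1
    · rw [hA k0 n, hA k0 n', if_pos rfl, if_pos rfl,
        show (b1' - b1) * (0 : F) + (b2' - b2) * (0 : F) ^ 2 = 0 by ring, psi_zero p, mul_one,
        ← Complex.ofReal_inv, Complex.conj_ofReal, Complex.ofReal_inv, hKC]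
    · rw [Finset.mul_sum]
      refine Finset.sum_bij (fun k _ => α ^ ((k : ℕ) - 1)) ?_ ?_ ?_ ?_
      · intro k hk
        exact Finset.mem_erase.mpr ⟨pow_ne_zero _ hα0, Finset.mem_univ _⟩
      · intro k hk k' hk' hkk
        have hkne : (k : ℕ) ≠ 0 := fun h =>
          (Finset.mem_erase.mp hk).1 (Fin.ext (h.trans rfl))
        have hkne' : (k' : ℕ) ≠ 0 := fun h =>
          (Finset.mem_erase.mp hk').1 (Fin.ext (h.trans rfl))
        have := hpow_inj ((k : ℕ) - 1) ((k' : ℕ) - 1)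
          (by have := k.isLt; omega) (by have := k'.isLt; omega) hkk
        exact Fin.ext (by omega)
      · intro x hx
        have hx0 : x ≠ 0 := (Finset.mem_erase.mp hx).1
        obtain ⟨i, hi, hix⟩ := hpow_surj x hx0
        refine ⟨⟨i + 1, by omega⟩, Finset.mem_erase.mpr ⟨?_, Finset.mem_univ _⟩, ?_⟩
        · intro h
          have := congrArg Fin.val h
          simp [hk0] at this
        · simpa using hix
      · intro k hk
        have hkne : (k : ℕ) ≠ 0 := fun h =>
          (Finset.mem_erase.mp hk).1 (Fin.ext (h.trans rfl))
        rw [hA k n, hA k n', if_neg hkne, if_neg hkne]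
        rw [show 2 * ((k : ℕ) - 1) = ((k : ℕ) - 1) * 2 from mul_comm _ _, pow_mul]
        rw [map_mul, psi_conj, ← Complex.ofReal_inv, Complex.conj_ofReal, Complex.ofReal_inv,
          mul_mul_mul_comm, hKC, ← psi_add]
        congr 1
        simp only [b1, b2, b1', b2']; ring
  -- diagonal of the Gram matrix
  have hGdiag : ∀ n : Fin N, (∑ k : Fin K, (starRingEnd ℂ) (A k n) * A k n) = 1 := by
    intro n
    rw [hGram n n, sub_self, sub_self]
    have : ∀ x : F, addChar p ((0 : F) * x + 0 * x ^ 2) = 1 := by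
      intro x
      rw [show (0 : F) * x + 0 * x ^ 2 = 0 by ring, psi_zero p]
    rw [Finset.sum_congr rfl fun x _ => this x, Finset.sum_const, Finset.card_univ, hcard, ← hK,
      nsmul_eq_mul, mul_one, inv_mul_cancel₀]
    exact_mod_cast (by omega : K ≠ 0)
  -- off-diagonal coherence bound
  have hGoff : ∀ n n' : Fin N, n ≠ n' →
      ‖∑ k : Fin K, (starRingEnd ℂ) (A k n) * A k n'‖ ≤ (Real.sqrt K)⁻¹ := by
    intro n n' hne
    rw [hGram n n']
    set c1 := bOf α ((n' : ℕ) % K) - bOf α ((n : ℕ) % K) with hc1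
    set c2 := bOf α ((n' : ℕ) / K) - bOf α ((n : ℕ) / K) with hc2
    have hc : c1 ≠ 0 ∨ c2 ≠ 0 := by
      by_contra hcc
      push_neg at hcc
      exact hne (hBinj n n' (sub_eq_zero.mp hcc.1).symm (sub_eq_zero.mp hcc.2).symm)
    rcases eq_or_ne c2 0 with h2 | h2
    · have h1 : c1 ≠ 0 := by tauto
      rw [h2]
      have hzero : ∑ x : F, addChar p (c1 * x + 0 * x ^ 2) = 0 := by
        rw [Finset.sum_congr rfl fun x (_ : x ∈ Finset.univ) => by
          rw [show c1 * x + (0 : F) * x ^ 2 = c1 * x by ring]]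
        exact psi_sum_mul p c1 h1
      rw [hzero, mul_zero, norm_zero]
      positivity
    · rw [norm_mul, psi_quad_abs p hp2F c1 c2 h2, hcard, ← hK, norm_inv, Complex.norm_natCast]
      have heq : (K : ℝ)⁻¹ * Real.sqrt K = (Real.sqrt K)⁻¹ := by
        field_simp; rw [sq, hsqrt_sq]
      rw [heq]
  -- the difference vector
  set y : Fin N → ℝ := fun n => x₁ n - x₂ n with hy
  set z : Fin N → ℂ := fun n => ((y n : ℝ) : ℂ) with hz
  have hAz : A.mulVec z = 0 := by
    have hzz : z = (fun n => ((x₁ n : ℝ) : ℂ)) - (fun n => ((x₂ n : ℝ) : ℂ)) := by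
      funext n
      simp [hz, hy, Complex.ofReal_sub, Pi.sub_apply]
    rw [hzz, Matrix.mulVec_sub, hAx, sub_self]
  -- the support of y
  set T : Finset (Fin N) := Finset.univ.filter (fun n => y n ≠ 0) with hT
  have hTcard : (T.card : ℝ) ≤ 2 * s := by
    have hsub : T ⊆ (Finset.univ.filter fun n => x₁ n ≠ 0) ∪
        (Finset.univ.filter fun n => x₂ n ≠ 0) := by
      intro n hn
      rw [hT, Finset.mem_filter] at hn
      rw [Finset.mem_union, Finset.mem_filter, Finset.mem_filter]
      by_contra hcon
      push_neg at hcon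
      obtain ⟨hl, hr⟩ := hcon
      have h1 : x₁ n = 0 := by
        by_contra h; exact absurd (hl (Finset.mem_univ n)) (by simpa using h)
      have h2 : x₂ n = 0 := by
        by_contra h; exact absurd (hr (Finset.mem_univ n)) (by simpa using h)
      exact hn.2 (by rw [hy]; simp [h1, h2])
    have := (Finset.card_le_card hsub).trans (Finset.card_union_le _ _)
    have := this.trans (add_le_add hx₁ hx₂)
    push_cast
    exact_mod_cast by omega
  set E : ℝ := ∑ n : Fin N, y n ^ 2 with hE
  have hE0 : 0 ≤ E := Finset.sum_nonneg fun n _ => sq_nonneg _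
  set L : ℝ := ∑ n : Fin N, |y n| with hL
  -- the quadratic form identity
  set C : ℂ := ∑ n : Fin N, ∑ n' ∈ Finset.univ.erase n,
      (y n : ℂ) * (y n' : ℂ) * (∑ k : Fin K, (starRingEnd ℂ) (A k n) * A k n') with hC
  have h0 : (0 : ℂ) = (E : ℂ) + C := by
    have hL1 : ∀ k : Fin K, (starRingEnd ℂ) (A.mulVec z k) * A.mulVec z k
        = ∑ n : Fin N, ∑ n' : Fin N,
            (y n : ℂ) * (y n' : ℂ) * ((starRingEnd ℂ) (A k n) * A k n') := by
      intro k
      have hmv : A.mulVec z k = ∑ n : Fin N, A k n * z n := rfl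
      rw [hmv, map_sum, Finset.sum_mul_sum]
      refine Finset.sum_congr rfl fun n _ => Finset.sum_congr rfl fun n' _ => ?_
      rw [map_mul, hz]
      simp only []
      rw [Complex.conj_ofReal]
      ring
    have step1 : (0 : ℂ) = ∑ n : Fin N, ∑ n' : Fin N,
        (y n : ℂ) * (y n' : ℂ) * (∑ k : Fin K, (starRingEnd ℂ) (A k n) * A k n') := by
      calc (0 : ℂ) = ∑ k : Fin K, (starRingEnd ℂ) (A.mulVec z k) * A.mulVec z k := by
            rw [hAz]; simp
        _ = ∑ k : Fin K, ∑ n : Fin N, ∑ n' : Fin N,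
            (y n : ℂ) * (y n' : ℂ) * ((starRingEnd ℂ) (A k n) * A k n') :=
            Finset.sum_congr rfl fun k _ => hL1 k
        _ = ∑ n : Fin N, ∑ k : Fin K, ∑ n' : Fin N,
            (y n : ℂ) * (y n' : ℂ) * ((starRingEnd ℂ) (A k n) * A k n') := Finset.sum_comm
        _ = ∑ n : Fin N, ∑ n' : Fin N, ∑ k : Fin K,
            (y n : ℂ) * (y n' : ℂ) * ((starRingEnd ℂ) (A k n) * A k n') :=
            Finset.sum_congr rfl fun n _ => Finset.sum_comm
        _ = ∑ n : Fin N, ∑ n' : Fin N,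
            (y n : ℂ) * (y n' : ℂ) * (∑ k : Fin K, (starRingEnd ℂ) (A k n) * A k n') :=
            Finset.sum_congr rfl fun n _ => Finset.sum_congr rfl fun n' _ =>
              (Finset.mul_sum _ _ _).symm
    rw [step1]
    have hsplit : ∀ n : Fin N, (∑ n' : Fin N,
        (y n : ℂ) * (y n' : ℂ) * (∑ k : Fin K, (starRingEnd ℂ) (A k n) * A k n'))
        = ((y n : ℂ) ^ 2) + ∑ n' ∈ Finset.univ.erase n,
            (y n : ℂ) * (y n' : ℂ) * (∑ k : Fin K, (starRingEnd ℂ) (A k n) * A k n') := by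
      intro n
      rw [← Finset.add_sum_erase _ _ (Finset.mem_univ n), hGdiag n, mul_one, ← sq]
    rw [Finset.sum_congr rfl fun n _ => hsplit n, Finset.sum_add_distrib, ← hC]
    congr 1
    rw [hE]
    push_cast
    rfl
  have hEabs : E = ‖C‖ := by
    have h1 : (E : ℂ) = -C := by linear_combination -h0
    have := congrArg (‖·‖) h1
    rwa [Complex.norm_real, Real.norm_of_nonneg hE0, norm_neg] at this
  -- bound |C|
  have hCbound : ‖C‖ ≤ (Real.sqrt K)⁻¹ * (L * L - E) := by
    have step1 : ‖C‖ ≤ ∑ n : Fin N, ∑ n' ∈ Finset.univ.erase n,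
        |y n| * |y n'| * (Real.sqrt K)⁻¹ := by
      refine (norm_sum_le _ _).trans (Finset.sum_le_sum fun n _ => ?_)
      refine (norm_sum_le _ _).trans (Finset.sum_le_sum fun n' hn' => ?_)
      rw [norm_mul, norm_mul, Complex.norm_real, Complex.norm_real, Real.norm_eq_abs, Real.norm_eq_abs]
      have hne : n ≠ n' := fun h => (Finset.mem_erase.mp hn').1 h.symm
      exact mul_le_mul_of_nonneg_left (hGoff n n' hne) (by positivity)
    refine step1.trans ?_
    have hstep : ∀ n : Fin N, ∑ n' ∈ Finset.univ.erase n,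
        |y n| * |y n'| * (Real.sqrt K)⁻¹ = |y n| * (L - |y n|) * (Real.sqrt K)⁻¹ := by
      intro n
      rw [← Finset.sum_mul, ← Finset.mul_sum, Finset.sum_erase_eq_sub (Finset.mem_univ n), hL]
    rw [Finset.sum_congr rfl fun n _ => hstep n, ← Finset.sum_mul]
    rw [mul_comm ((Real.sqrt K)⁻¹) _]
    refine mul_le_mul_of_nonneg_right (le_of_eq ?_) (by positivity)
    rw [Finset.sum_congr rfl fun n (_ : n ∈ Finset.univ) => mul_sub (|y n|) L (|y n|),
      Finset.sum_sub_distrib, ← Finset.sum_mul, ← hL]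
    congr 1
    refine Finset.sum_congr rfl fun n _ => ?_
    rw [← sq, _root_.sq_abs]
  -- Cauchy-Schwarz
  have hCS : L * L ≤ (T.card : ℝ) * E := by
    have hLT : L = ∑ n ∈ T, |y n| := by
      rw [hL]
      refine (Finset.sum_subset (Finset.subset_univ T) fun n _ hn => ?_).symm
      rw [hT, Finset.mem_filter] at hn
      push_neg at hn
      have : y n = 0 := by by_contra h; exact h (hn (Finset.mem_univ n))
      rw [this, abs_zero]
    calc L * L = (∑ n ∈ T, |y n|) ^ 2 := by rw [hLT, sq]
      _ ≤ (T.card : ℝ) * ∑ n ∈ T, |y n| ^ 2 := sq_sum_le_card_mul_sum_sq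
      _ = (T.card : ℝ) * ∑ n ∈ T, y n ^ 2 := by
          congr 1
          exact Finset.sum_congr rfl fun n _ => by rw [_root_.sq_abs]
      _ ≤ (T.card : ℝ) * E := by
          refine mul_le_mul_of_nonneg_left ?_ (by positivity)
          rw [hE]
          exact Finset.sum_le_sum_of_subset_of_nonneg (Finset.subset_univ T)
            fun n _ _ => sq_nonneg _
  -- conclude E = 0
  have h2s : 2 * (s : ℝ) < Real.sqrt K + 1 := by linarith
  have hkey : Real.sqrt K * E ≤ L * L - E := by
    have h1 : E ≤ (Real.sqrt K)⁻¹ * (L * L - E) := hEabs.le.trans hCbound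
    have h2 := mul_le_mul_of_nonneg_left h1 hsqrtpos.le
    rwa [← mul_assoc, mul_inv_cancel₀ hsqrtpos.ne', one_mul] at h2
  have hEzero : E = 0 := by
    rcases hE0.lt_or_eq with hpos | h
    · exfalso
      have h2sE : 2 * (s : ℝ) * E < (Real.sqrt K + 1) * E :=
        mul_lt_mul_of_pos_right h2s hpos
      have hTE : (T.card : ℝ) * E ≤ 2 * s * E :=
        mul_le_mul_of_nonneg_right hTcard hE0
      linarith
    · exact h.symm
  have hyzero : ∀ n : Fin N, y n = 0 := by
    intro n
    have hn := (Finset.sum_eq_zero_iff_of_nonneg fun i (_ : i ∈ Finset.univ) =>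
      sq_nonneg (y i)).mp (hE ▸ hEzero) n (Finset.mem_univ n)
    exact pow_eq_zero_iff (by norm_num) |>.mp hn
  funext n
  have h : x₁ n - x₂ n = 0 := hyzero n
  linarith
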